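/- For fixed n ≥ 1 and 1 ≤ k ≤ n, the polynomial identity Σ_d A(n,d,k) x^d = (1-x)^n Σ_{j≥0} j^{k-1}(j+1)^{n-k} x^j holds as an identity of formal power series (with 0^0 = 1). -/

import Mathlib

open Finset

/-- Number of descents of a permutation of `Fin n` (positions `i` with `π(i) > π(i+1)`). -/
def descents (n : ℕ) (π : Equiv.Perm (Fin n)) : ℕ :=
  (Finset.univ.filter (fun i : Fin n =>
    ∃ j : Fin n, (j : ℕ) = (i : ℕ) + 1 ∧ π j < π i)).card

/-- `A n d k` : number of permutations of `{1,…,n}` with exactly `d` descents and first value `k`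
(1-based values; `d : ℤ`, so `A n d k = 0` when `d < 0`). -/
def A (n : ℕ) (d : ℤ) (k : ℕ) : ℕ :=
  (Finset.univ.filter (fun π : Equiv.Perm (Fin n) =>
    (descents n π : ℤ) = d ∧ ∃ i : Fin n, (i : ℕ) = 0 ∧ (π i : ℕ) + 1 = k)).card

/-- `Alast n d k` : number with `d` descents and last value `k`. -/
def Alast (n : ℕ) (d : ℤ) (k : ℕ) : ℕ :=
  (Finset.univ.filter (fun π : Equiv.Perm (Fin n) =>
    (descents n π : ℤ) = d ∧ ∃ i : Fin n, (i : ℕ) + 1 = n ∧ (π i : ℕ) + 1 = k)).card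

/-- Eulerian number: permutations of `{1,…,n}` with `d` descents. -/
def Eul (n : ℕ) (d : ℤ) : ℕ :=
  (Finset.univ.filter (fun π : Equiv.Perm (Fin n) => (descents n π : ℤ) = d)).card

namespace Stmt11Aux

variable {m : ℕ}

/-- The set of descent positions. -/
def desSet (π : Equiv.Perm (Fin (m+1))) : Finset (Fin (m+1)) :=
  Finset.univ.filter (fun i : Fin (m+1) =>
    ∃ j : Fin (m+1), (j : ℕ) = (i : ℕ) + 1 ∧ π j < π i)

lemma descents_eq (π : Equiv.Perm (Fin (m+1))) : descents (m+1) π = (desSet π).card := rfl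

lemma mem_desSet {π : Equiv.Perm (Fin (m+1))} {i : Fin (m+1)} :
    i ∈ desSet π ↔ ∃ h : (i : ℕ) + 1 < m + 1, π ⟨(i : ℕ) + 1, h⟩ < π i := by
  simp only [desSet, mem_filter, mem_univ, true_and]
  constructor
  · rintro ⟨j, hj, hlt⟩
    have h1 : (i : ℕ) + 1 < m + 1 := hj ▸ j.isLt
    refine ⟨h1, ?_⟩
    have : j = ⟨(i : ℕ) + 1, h1⟩ := Fin.ext hj
    exact this ▸ hlt
  · rintro ⟨h, hlt⟩
    exact ⟨⟨(i : ℕ) + 1, h⟩, rfl, hlt⟩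

lemma descents_le (π : Equiv.Perm (Fin (m+1))) : descents (m+1) π ≤ m := by
  rw [descents_eq]
  have hsub : desSet π ⊆ Finset.univ.erase (Fin.last m) := by
    intro i hi
    rw [mem_desSet] at hi
    obtain ⟨h, -⟩ := hi
    refine Finset.mem_erase.2 ⟨?_, Finset.mem_univ _⟩
    intro hcontra
    subst hcontra
    simp [Fin.last] at h
  calc (desSet π).card ≤ (Finset.univ.erase (Fin.last m)).card := Finset.card_le_card hsub
    _ = m := by rw [Finset.card_erase_of_mem (Finset.mem_univ _)]; simp

/-- Sum of `b i` over positions `i ≥ t`. -/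
def sumFrom (b : Fin (m+1) → ℕ) (t : ℕ) : ℕ :=
  ∑ i : Fin (m+1), if t ≤ (i : ℕ) then b i else 0

lemma sumFrom_zero (b : Fin (m+1) → ℕ) : sumFrom b 0 = ∑ i, b i := by
  simp [sumFrom]

lemma sumFrom_of_ge (b : Fin (m+1) → ℕ) {t : ℕ} (ht : m + 1 ≤ t) : sumFrom b t = 0 := by
  apply Finset.sum_eq_zero
  intro i _
  rw [if_neg]
  omega

lemma sumFrom_succ (b : Fin (m+1) → ℕ) {t : ℕ} (ht : t < m + 1) :
    sumFrom b t = b ⟨t, ht⟩ + sumFrom b (t+1) := by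
  have : ∀ i : Fin (m+1), (if t ≤ (i : ℕ) then b i else 0)
      = (if (i : ℕ) = t then b i else 0) + (if t + 1 ≤ (i : ℕ) then b i else 0) := by
    intro i
    rcases Nat.lt_trichotomy (i : ℕ) t with h | h | h
    · rw [if_neg (by omega), if_neg (by omega), if_neg (by omega)]
    · rw [if_pos (by omega), if_pos (by omega), if_neg (by omega)]; omega
    · rw [if_pos (by omega), if_neg (by omega), if_pos (by omega)]; omega
  rw [sumFrom, Finset.sum_congr rfl (fun i _ => this i), Finset.sum_add_distrib]
  congr 1
  rw [Finset.sum_eq_single (⟨t, ht⟩ : Fin (m+1))]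
  · simp
  · intro i _ hne
    rw [if_neg]
    intro hc
    exact hne (Fin.ext hc)
  · intro h; exact absurd (Finset.mem_univ _) h

lemma sumFrom_le (b : Fin (m+1) → ℕ) (t : ℕ) : sumFrom b t ≤ ∑ i, b i := by
  apply Finset.sum_le_sum
  intro i _
  split_ifs <;> simp

lemma sumFrom_split (b : Fin (m+1) → ℕ) (t : ℕ) :
    ∑ i, b i = (∑ i : Fin (m+1), if (i : ℕ) < t then b i else 0) + sumFrom b t := by
  rw [sumFrom, ← Finset.sum_add_distrib]
  apply Finset.sum_congr rfl
  intro i _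
  split_ifs <;> omega


/-- Bar vectors compatible with `π`, with total `j`. -/
def Bset (π : Equiv.Perm (Fin (m+1))) (j : ℕ) : Finset (Fin (m+1) → ℕ) :=
  (Finset.Nat.antidiagonalTuple (m+1) j).filter (fun b => ∀ i ∈ desSet π, 1 ≤ b i)

/-- Barred permutations with first value `k` (1-based) and `j` bars. -/
def Sset (k j : ℕ) : Finset ((_ : Equiv.Perm (Fin (m+1))) × (Fin (m+1) → ℕ)) :=
  (Finset.univ.filter fun π : Equiv.Perm (Fin (m+1)) => (π 0 : ℕ) + 1 = k).sigma
    (fun π => Bset π j)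

/-- Target set of labelling functions. -/
def Tset (k j : ℕ) : Finset (Fin (m+1) → ℕ) :=
  Fintype.piFinset (fun v : Fin (m+1) =>
    if (v : ℕ) + 1 = k then {j} else
      if (v : ℕ) + 1 < k then Finset.range j else Finset.range (j+1))

lemma mem_Bset {π : Equiv.Perm (Fin (m+1))} {j : ℕ} {b : Fin (m+1) → ℕ} :
    b ∈ Bset π j ↔ (∑ i, b i = j) ∧ ∀ i ∈ desSet π, 1 ≤ b i := by
  rw [Bset, Finset.mem_filter, Finset.Nat.mem_antidiagonalTuple]

lemma card_Bset (π : Equiv.Perm (Fin (m+1))) (j : ℕ) :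
    (Bset π j).card = if (desSet π).card ≤ j then
      (Finset.Nat.antidiagonalTuple (m+1) (j - (desSet π).card)).card else 0 := by
  set e : Fin (m+1) → ℕ := fun i => if i ∈ desSet π then 1 else 0 with he
  have hesum : ∑ i, e i = (desSet π).card := by
    rw [he]
    simp only [Finset.sum_ite_mem, Finset.univ_inter]
    simp
  have heleb : ∀ b : Fin (m+1) → ℕ, (∀ i ∈ desSet π, 1 ≤ b i) → ∀ i : Fin (m+1), e i ≤ b i := by
    intro b hb i
    rw [he]
    by_cases hi : i ∈ desSet π
    · simpa [hi] using hb i hi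
    · simp [hi]
  split_ifs with hd
  · refine Finset.card_bij' (fun b _ => fun i => b i - e i)
      (fun b _ => fun i => b i + e i) ?_ ?_ ?_ ?_
    · intro b hb
      obtain ⟨hs, h1⟩ := mem_Bset.1 hb
      rw [Finset.Nat.mem_antidiagonalTuple]
      show ∑ i : Fin (m+1), (b i - e i) = j - (desSet π).card
      rw [Finset.sum_tsub_distrib Finset.univ (fun i _ => heleb b h1 i), hs, hesum]
    · intro b hb
      rw [Finset.Nat.mem_antidiagonalTuple] at hb
      rw [mem_Bset]
      constructor
      · show ∑ i : Fin (m+1), (b i + e i) = j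
        rw [Finset.sum_add_distrib, hb, hesum]; omega
      · intro i hi
        show 1 ≤ b i + e i
        rw [he]; simp [hi]
    · intro b hb
      obtain ⟨-, h1⟩ := mem_Bset.1 hb
      show (fun i => (b i - e i) + e i) = b
      funext i
      have := heleb b h1 i
      omega
    · intro b _
      show (fun i => (b i + e i) - e i) = b
      funext i
      omega
  · rw [Finset.card_eq_zero, Finset.eq_empty_iff_forall_notMem]
    intro b hb
    obtain ⟨hs, h1⟩ := mem_Bset.1 hb
    have : ∑ i, e i ≤ ∑ i, b i := Finset.sum_le_sum (fun i _ => heleb b h1 i)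
    rw [hs, hesum] at this
    omega

lemma A_eq (a k : ℕ) : A (m+1) (a : ℤ) k =
    (Finset.univ.filter (fun π : Equiv.Perm (Fin (m+1)) =>
      (π 0 : ℕ) + 1 = k ∧ (desSet π).card = a)).card := by
  unfold A
  congr 1
  apply Finset.filter_congr
  intro π _
  rw [descents_eq]
  constructor
  · rintro ⟨h1, i, hi0, hik⟩
    have : i = 0 := Fin.ext (by simpa using hi0)
    subst this
    exact ⟨hik, by exact_mod_cast h1⟩
  · rintro ⟨hk, hcard⟩
    exact ⟨by exact_mod_cast hcard, 0, by simp, hk⟩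

lemma A_zero_of_ge {a : ℕ} (ha : m + 1 ≤ a) (k : ℕ) : A (m+1) (a : ℤ) k = 0 := by
  rw [A_eq, Finset.card_eq_zero, Finset.eq_empty_iff_forall_notMem]
  intro π hπ
  rw [Finset.mem_filter] at hπ
  have := descents_le π
  rw [descents_eq] at this
  omega

lemma card_adt : ∀ (n b : ℕ), (Finset.Nat.antidiagonalTuple (n+1) b).card = (n + b).choose n := by
  intro n
  induction n with
  | zero => intro b; simp
  | succ n ih =>
    intro b
    have key : (Finset.Nat.antidiagonalTuple (n+2) b).card
        = ((Finset.HasAntidiagonal.antidiagonal b).sigma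
            (fun p : ℕ × ℕ => Finset.Nat.antidiagonalTuple (n+1) p.2)).card := by
      refine Finset.card_bij'
        (fun x _ => ⟨(x 0, ∑ i, Fin.tail x i), Fin.tail x⟩)
        (fun p _ => Fin.cons p.1.1 p.2) ?_ ?_ ?_ ?_
      · intro x hx
        rw [Finset.Nat.mem_antidiagonalTuple] at hx
        refine Finset.mem_sigma.2 ⟨Finset.HasAntidiagonal.mem_antidiagonal.2 ?_, Finset.Nat.mem_antidiagonalTuple.2 rfl⟩
        show x 0 + ∑ i, Fin.tail x i = b
        rw [← hx]
        exact (Fin.sum_univ_succ x).symm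
      · rintro ⟨⟨p1, p2⟩, y⟩ hp
        rw [Finset.mem_sigma, Finset.HasAntidiagonal.mem_antidiagonal] at hp
        have h2 : ∑ i, y i = p2 := Finset.Nat.mem_antidiagonalTuple.1 hp.2
        show (Fin.cons p1 y : Fin (n+2) → ℕ) ∈ _
        rw [Finset.Nat.mem_antidiagonalTuple, Fin.sum_cons, h2]
        exact hp.1
      · intro x _
        exact Fin.cons_self_tail x
      · rintro ⟨⟨p1, p2⟩, y⟩ hp
        rw [Finset.mem_sigma, Finset.HasAntidiagonal.mem_antidiagonal] at hp
        have h2 : ∑ i, y i = p2 := Finset.Nat.mem_antidiagonalTuple.1 hp.2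
        simp only [Fin.cons_zero, Fin.tail_cons, h2]
    rw [key, Finset.card_sigma]
    have : ∀ p ∈ Finset.HasAntidiagonal.antidiagonal b,
        (Finset.Nat.antidiagonalTuple (n+1) p.2).card = (n + p.2).choose n :=
      fun p _ => ih p.2
    rw [Finset.sum_congr rfl this, Finset.sum_antidiagonal_choose_add]
    rw [show n + 1 + b = (n + b) + 1 by omega, Nat.choose_succ_succ]

lemma card_Sset (k j : ℕ) :
    (Sset (m := m) k j).card
      = ∑ p ∈ Finset.HasAntidiagonal.antidiagonal j, A (m+1) (p.1 : ℤ) k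
          * (Finset.Nat.antidiagonalTuple (m+1) p.2).card := by
  rw [Sset, Finset.card_sigma]
  set P := Finset.univ.filter fun π : Equiv.Perm (Fin (m+1)) => (π 0 : ℕ) + 1 = k with hP
  have h1 : ∑ π ∈ P.filter (fun π => (desSet π).card ≤ j), (Bset π j).card
      = ∑ π ∈ P, (Bset π j).card := by
    apply Finset.sum_filter_of_ne
    intro π _ hne
    show (desSet π).card ≤ j
    by_contra h
    rw [card_Bset, if_neg h] at hne
    exact hne rfl
  rw [← h1]
  rw [← Finset.sum_fiberwise_of_maps_to (g := fun π => (desSet π).card)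
    (t := Finset.range (j+1)) (fun π hπ => by
      rw [Finset.mem_filter] at hπ
      have h2 : (desSet π).card ≤ j := hπ.2
      show (desSet π).card ∈ Finset.range (j+1)
      rw [Finset.mem_range]; omega)]
  have h2 : ∀ a ∈ Finset.range (j+1),
      ∑ π ∈ (P.filter (fun π => (desSet π).card ≤ j)).filter
          (fun π => (desSet π).card = a), (Bset π j).card
      = A (m+1) (a : ℤ) k * (Finset.Nat.antidiagonalTuple (m+1) (j - a)).card := by
    intro a haj
    rw [Finset.mem_range] at haj
    have hflt : (P.filter (fun π => (desSet π).card ≤ j)).filter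
        (fun π => (desSet π).card = a)
        = Finset.univ.filter (fun π : Equiv.Perm (Fin (m+1)) =>
            (π 0 : ℕ) + 1 = k ∧ (desSet π).card = a) := by
      ext π
      simp only [hP, Finset.mem_filter, Finset.mem_univ, true_and]
      constructor
      · rintro ⟨⟨hh1, -⟩, hh2⟩; exact ⟨hh1, hh2⟩
      · rintro ⟨hh1, hh2⟩; exact ⟨⟨hh1, by omega⟩, hh2⟩
    have hval : ∀ π ∈ (P.filter (fun π => (desSet π).card ≤ j)).filter
        (fun π => (desSet π).card = a), (Bset π j).card
        = (Finset.Nat.antidiagonalTuple (m+1) (j - a)).card := by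
      intro π hπ
      rw [Finset.mem_filter] at hπ
      rw [card_Bset, hπ.2, if_pos (by omega)]
    rw [Finset.sum_congr rfl hval, Finset.sum_const, smul_eq_mul, hflt, ← A_eq]
  rw [Finset.sum_congr rfl h2,
    Finset.Nat.sum_antidiagonal_eq_sum_range_succ_mk
      (fun p : ℕ × ℕ => A (m+1) (p.1 : ℤ) k * (Finset.Nat.antidiagonalTuple (m+1) p.2).card) j]

lemma card_Tset {k j : ℕ} (hk1 : 1 ≤ k) (hkn : k ≤ m + 1) :
    (Tset (m := m) k j).card = j ^ (k-1) * (j+1) ^ (m+1-k) := by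
  rw [Tset, Fintype.card_piFinset]
  have hc : ∀ v : Fin (m+1),
      (if (v : ℕ) + 1 = k then ({j} : Finset ℕ) else
        if (v : ℕ) + 1 < k then Finset.range j else Finset.range (j+1)).card
      = (fun t : ℕ => if t + 1 = k then 1 else if t + 1 < k then j else j + 1) (v : ℕ) := by
    intro v
    show _ = if (v : ℕ) + 1 = k then 1 else if (v : ℕ) + 1 < k then j else j + 1
    split_ifs <;> simp
  rw [Finset.prod_congr rfl (fun v _ => hc v),
    Fin.prod_univ_eq_prod_range (fun t : ℕ => if t + 1 = k then 1 else if t + 1 < k then j else j + 1) (m+1),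
    Finset.range_eq_Ico]
  rw [← Finset.prod_Ico_consecutive _ (Nat.zero_le (k-1)) (by omega : k - 1 ≤ m + 1),
    ← Finset.prod_Ico_consecutive _ (by omega : k - 1 ≤ k) (by omega : k ≤ m + 1)]
  have e1 : ∏ t ∈ Finset.Ico 0 (k-1),
      (fun t : ℕ => if t + 1 = k then 1 else if t + 1 < k then j else j + 1) t = j ^ (k-1) := by
    rw [Finset.prod_congr rfl (g := fun _ => j) (fun t ht => by
      rw [Finset.mem_Ico] at ht
      show (if t + 1 = k then 1 else if t + 1 < k then j else j + 1) = j
      rw [if_neg (by omega), if_pos (by omega)]), Finset.prod_const, Nat.card_Ico, Nat.sub_zero]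
  have e2 : ∏ t ∈ Finset.Ico (k-1) k,
      (fun t : ℕ => if t + 1 = k then 1 else if t + 1 < k then j else j + 1) t = 1 := by
    have hIco : Finset.Ico (k-1) k = {k-1} := by
      ext t
      simp only [Finset.mem_Ico, Finset.mem_singleton]
      omega
    rw [hIco, Finset.prod_singleton]
    show (if (k-1) + 1 = k then 1 else if (k-1) + 1 < k then j else j + 1) = 1
    rw [if_pos (by omega)]
  have e3 : ∏ t ∈ Finset.Ico k (m+1),
      (fun t : ℕ => if t + 1 = k then 1 else if t + 1 < k then j else j + 1) t = (j+1) ^ (m+1-k) := by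
    rw [Finset.prod_congr rfl (g := fun _ => j+1) (fun t ht => by
      rw [Finset.mem_Ico] at ht
      show (if t + 1 = k then 1 else if t + 1 < k then j else j + 1) = j + 1
      rw [if_neg (by omega), if_neg (by omega)]), Finset.prod_const, Nat.card_Ico]
  rw [e1, e2, e3, one_mul]


/-! ### The bijection between barred permutations and labelling functions -/

/-- The labelling map. -/
def Phi (a : (_ : Equiv.Perm (Fin (m+1))) × (Fin (m+1) → ℕ)) : Fin (m+1) → ℕ :=
  fun v => sumFrom a.2 ((a.1.symm v : Fin (m+1)) : ℕ)

lemma Phi_pi (π : Equiv.Perm (Fin (m+1))) (b : Fin (m+1) → ℕ) (i : Fin (m+1)) :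
    Phi ⟨π, b⟩ (π i) = sumFrom b (i : ℕ) := by
  rw [Phi, Equiv.symm_apply_apply]

lemma Phi_adj (π : Equiv.Perm (Fin (m+1))) (b : Fin (m+1) → ℕ) {i i' : Fin (m+1)}
    (h : (i' : ℕ) = (i : ℕ) + 1) :
    Phi ⟨π, b⟩ (π i) = b i + Phi ⟨π, b⟩ (π i') := by
  rw [Phi_pi, Phi_pi, h, sumFrom_succ b i.isLt, Fin.eta]

/-- The sorting key. -/
def Kf (j : ℕ) (f : Fin (m+1) → ℕ) (v : Fin (m+1)) : ℕ := (j - f v) * (m + 1) + (v : ℕ)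

lemma Kf_lt_of_flt {j : ℕ} {f : Fin (m+1) → ℕ} {v w : Fin (m+1)}
    (hv : f v ≤ j) (h : f w < f v) : Kf j f v < Kf j f w := by
  have h1 : j - f v + 1 ≤ j - f w := by omega
  calc (j - f v) * (m+1) + (v : ℕ) < (j - f v) * (m+1) + (m+1) := by
        have := v.isLt; omega
    _ = (j - f v + 1) * (m+1) := by ring
    _ ≤ (j - f w) * (m+1) := Nat.mul_le_mul_right _ h1
    _ ≤ (j - f w) * (m+1) + (w : ℕ) := Nat.le_add_right _ _

lemma Kf_lt_of_eq {j : ℕ} {f : Fin (m+1) → ℕ} {v w : Fin (m+1)}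
    (hfw : f w = f v) (hvw : v < w) : Kf j f v < Kf j f w := by
  rw [Kf, Kf, hfw]
  have : (v : ℕ) < (w : ℕ) := hvw
  omega

lemma Kf_inj {j : ℕ} {f : Fin (m+1) → ℕ} (v w : Fin (m+1)) (h : Kf j f v = Kf j f w) :
    v = w := by
  have hv : Kf j f v % (m+1) = (v : ℕ) := by
    rw [Kf, Nat.mul_comm, Nat.mul_add_mod, Nat.mod_eq_of_lt v.isLt]
  have hw : Kf j f w % (m+1) = (w : ℕ) := by
    rw [Kf, Nat.mul_comm, Nat.mul_add_mod, Nat.mod_eq_of_lt w.isLt]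
  exact Fin.ext (by rw [← hv, ← hw, h])

lemma Kf_lt_imp {j : ℕ} {f : Fin (m+1) → ℕ} {v w : Fin (m+1)}
    (hfw : f w ≤ j) (h : Kf j f v < Kf j f w) : f w ≤ f v := by
  rw [Kf, Kf] at h
  by_contra hc
  push_neg at hc
  have h1 : j - f w + 1 ≤ j - f v := by omega
  have h2 : (j - f w + 1) * (m+1) ≤ (j - f v) * (m+1) := Nat.mul_le_mul_right _ h1
  rw [add_mul, one_mul] at h2
  have hw := w.isLt
  linarith

lemma strictMono_Kf {k j : ℕ} {a : (_ : Equiv.Perm (Fin (m+1))) × (Fin (m+1) → ℕ)}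
    (ha : a ∈ Sset (m := m) k j) :
    StrictMono (fun i => Kf j (Phi a) (a.1 i)) := by
  obtain ⟨π, b⟩ := a
  rw [Sset, Finset.mem_sigma] at ha
  obtain ⟨hsum, hdes⟩ := mem_Bset.1 ha.2
  replace hsum : ∑ i, b i = j := hsum
  replace hdes : ∀ i ∈ desSet π, 1 ≤ b i := hdes
  rw [Fin.strictMono_iff_lt_succ]
  intro i
  show Kf j (Phi ⟨π, b⟩) (π (Fin.castSucc i)) < Kf j (Phi ⟨π, b⟩) (π (Fin.succ i))
  have hcoe : ((Fin.succ i : Fin (m+1)) : ℕ) = ((Fin.castSucc i : Fin (m+1)) : ℕ) + 1 := by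
    simp
  have hadj := Phi_adj π b hcoe
  have hle : Phi ⟨π, b⟩ (π (Fin.castSucc i)) ≤ j := by
    rw [Phi_pi]
    exact le_trans (sumFrom_le b _) (le_of_eq hsum)
  by_cases hbi : b (Fin.castSucc i) = 0
  · have hfe : Phi ⟨π, b⟩ (π (Fin.succ i)) = Phi ⟨π, b⟩ (π (Fin.castSucc i)) := by omega
    have hnd : (Fin.castSucc i : Fin (m+1)) ∉ desSet π := by
      intro hmem
      have := hdes _ hmem
      omega
    have hne : π (Fin.castSucc i) ≠ π (Fin.succ i) :=
      π.injective.ne (Fin.castSucc_lt_succ : Fin.castSucc i < Fin.succ i).ne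
    have hnlt : ¬ π (Fin.succ i) < π (Fin.castSucc i) := by
      intro hc
      apply hnd
      rw [mem_desSet]
      refine ⟨by omega, ?_⟩
      have : (⟨((Fin.castSucc i : Fin (m+1)) : ℕ) + 1, by omega⟩ : Fin (m+1)) = Fin.succ i :=
        Fin.ext (by simp)
      rw [this]
      exact hc
    have hlt : π (Fin.castSucc i) < π (Fin.succ i) := by
      rcases lt_or_gt_of_ne hne with h | h
      · exact h
      · exact absurd h hnlt
    exact Kf_lt_of_eq hfe hlt
  · exact Kf_lt_of_flt hle (by omega)

lemma Phi_inj {k j : ℕ} {a a' : (_ : Equiv.Perm (Fin (m+1))) × (Fin (m+1) → ℕ)}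
    (ha : a ∈ Sset (m := m) k j) (ha' : a' ∈ Sset (m := m) k j)
    (h : Phi a = Phi a') : a = a' := by
  have hm := (strictMono_Kf ha).monotone
  have hm' := (strictMono_Kf ha').monotone
  obtain ⟨π, b⟩ := a
  obtain ⟨π', b'⟩ := a'
  have hm'2 : Monotone (fun i => Kf j (Phi ⟨π, b⟩) (π' i)) := by
    rw [h]; exact hm'
  have huniq : (Kf j (Phi ⟨π, b⟩)) ∘ π = (Kf j (Phi ⟨π, b⟩)) ∘ π' :=
    Tuple.unique_monotone hm hm'2
  have hππ' : π = π' := Equiv.ext fun i => Kf_inj _ _ (congrFun huniq i)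
  subst hππ'
  have hbb' : b = b' := by
    funext i
    have e1 : sumFrom b ((i : ℕ) + 1) = sumFrom b' ((i : ℕ) + 1) := by
      rcases Nat.lt_or_ge ((i : ℕ) + 1) (m+1) with hlt | hge
      · have h1 := congrFun h (π ⟨(i : ℕ) + 1, hlt⟩)
        rw [Phi_pi, Phi_pi] at h1
        exact h1
      · rw [sumFrom_of_ge _ hge, sumFrom_of_ge _ hge]
    have h2 := congrFun h (π i)
    rw [Phi_pi, Phi_pi] at h2
    rw [sumFrom_succ b i.isLt, sumFrom_succ b' i.isLt, Fin.eta] at h2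
    omega
  rw [hbb']

lemma run_le {π : Equiv.Perm (Fin (m+1))} {b : Fin (m+1) → ℕ}
    (hdes : ∀ i ∈ desSet π, 1 ≤ b i) :
    ∀ q : ℕ, ∀ hq : q < m + 1, (∀ i : Fin (m+1), (i : ℕ) < q → b i = 0) →
      π 0 ≤ π ⟨q, hq⟩ := by
  intro q
  induction q with
  | zero => intro hq _; exact le_of_eq (congrArg π (Fin.ext rfl))
  | succ q ih =>
    intro hq hz
    have hq' : q < m + 1 := by omega
    have h1 : π 0 ≤ π ⟨q, hq'⟩ := ih hq' (fun i hi => hz i (by omega))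
    have hbq : b ⟨q, hq'⟩ = 0 := hz _ (by simp)
    have hnd : (⟨q, hq'⟩ : Fin (m+1)) ∉ desSet π := by
      intro hmem
      have := hdes _ hmem
      omega
    have hstep : π ⟨q, hq'⟩ ≤ π ⟨q+1, hq⟩ := by
      by_contra hc
      push_neg at hc
      apply hnd
      rw [mem_desSet]
      exact ⟨hq, hc⟩
    exact le_trans h1 hstep

lemma Phi_mem {k j : ℕ} (hk1 : 1 ≤ k) {a : (_ : Equiv.Perm (Fin (m+1))) × (Fin (m+1) → ℕ)}
    (ha : a ∈ Sset (m := m) k j) : Phi a ∈ Tset k j := by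
  obtain ⟨π, b⟩ := a
  rw [Sset, Finset.mem_sigma] at ha
  obtain ⟨hfst, hb⟩ := ha
  rw [Finset.mem_filter] at hfst
  have hfirst : ((π 0 : Fin (m+1)) : ℕ) + 1 = k := hfst.2
  obtain ⟨hsum, hdes⟩ := mem_Bset.1 hb
  rw [Tset, Fintype.mem_piFinset]
  intro v
  have hle : Phi ⟨π, b⟩ v ≤ j := le_trans (sumFrom_le b _) (le_of_eq hsum)
  split_ifs with h1 h2
  · have hv : v = π 0 := Fin.ext (by omega)
    rw [Finset.mem_singleton, hv, Phi_pi]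
    rw [show ((0 : Fin (m+1)) : ℕ) = 0 from rfl, sumFrom_zero, hsum]
  · rw [Finset.mem_range]
    rcases Nat.lt_or_ge (Phi ⟨π, b⟩ v) j with hlt | hge
    · exact hlt
    · exfalso
      have heq : sumFrom b ((π.symm v : Fin (m+1)) : ℕ) = j := by
        have : Phi ⟨π, b⟩ v = j := le_antisymm hle hge
        exact this
      have hzero : ∀ i : Fin (m+1), (i : ℕ) < ((π.symm v : Fin (m+1)) : ℕ) → b i = 0 := by
        have hsplit := sumFrom_split b ((π.symm v : Fin (m+1)) : ℕ)
        rw [heq, hsum] at hsplit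
        have hz : ∑ i : Fin (m+1),
            (if (i : ℕ) < ((π.symm v : Fin (m+1)) : ℕ) then b i else 0) = 0 := by omega
        intro i hi
        have := (Finset.sum_eq_zero_iff.1 hz) i (Finset.mem_univ i)
        rw [if_pos hi] at this
        exact this
      have hrun := run_le hdes ((π.symm v : Fin (m+1)) : ℕ) (π.symm v).isLt hzero
      rw [Fin.eta, Equiv.apply_symm_apply] at hrun
      have : ((π 0 : Fin (m+1)) : ℕ) ≤ (v : ℕ) := hrun
      omega
  · rw [Finset.mem_range]
    omega

lemma Phi_surj {k j : ℕ} (hk1 : 1 ≤ k) (hkn : k ≤ m + 1) :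
    ∀ f ∈ Tset (m := m) k j, ∃ a, ∃ _ : a ∈ Sset (m := m) k j, Phi a = f := by
  intro f hf
  rw [Tset, Fintype.mem_piFinset] at hf
  have hfle : ∀ v, f v ≤ j := by
    intro v
    have := hf v
    split_ifs at this with h1 h2
    · rw [Finset.mem_singleton] at this; omega
    · rw [Finset.mem_range] at this; omega
    · rw [Finset.mem_range] at this; omega
  have hk1m : k - 1 < m + 1 := by omega
  have hfvk : f ⟨k-1, hk1m⟩ = j := by
    have := hf ⟨k-1, hk1m⟩
    rw [if_pos (show (k-1) + 1 = k by omega)] at this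
    rw [Finset.mem_singleton] at this
    exact this
  set K : Fin (m+1) → ℕ := Kf j f with hK
  set π : Equiv.Perm (Fin (m+1)) := Tuple.sort K with hπdef
  have hmono : Monotone (K ∘ π) := Tuple.monotone_sort K
  have hKinj : Function.Injective K := fun v w h => Kf_inj v w h
  have hsm : StrictMono (K ∘ π) := hmono.strictMono_of_injective (hKinj.comp π.injective)
  have hKvk : K ⟨k-1, hk1m⟩ = k - 1 := by
    rw [hK, Kf, hfvk]
    simp
  have hKmin : ∀ v : Fin (m+1), v ≠ ⟨k-1, hk1m⟩ → K ⟨k-1, hk1m⟩ < K v := by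
    intro v hv
    rw [hKvk]
    have := hf v
    split_ifs at this with h1 h2
    · exact absurd (Fin.ext (show (v : ℕ) = k - 1 by omega)) hv
    · rw [Finset.mem_range] at this
      have hge : 1 ≤ j - f v := by omega
      calc k - 1 < m + 1 := by omega
        _ = 1 * (m+1) := (one_mul _).symm
        _ ≤ (j - f v) * (m+1) := Nat.mul_le_mul_right _ hge
        _ ≤ (j - f v) * (m+1) + (v : ℕ) := Nat.le_add_right _ _
    · calc k - 1 < k := by omega
        _ ≤ (v : ℕ) := by omega
        _ ≤ (j - f v) * (m+1) + (v : ℕ) := Nat.le_add_left _ _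
  have hπ0 : π 0 = ⟨k-1, hk1m⟩ := by
    by_contra hc
    have h1 : K (π 0) ≤ K ⟨k-1, hk1m⟩ := by
      have h2 := hmono (Fin.zero_le (π.symm ⟨k-1, hk1m⟩))
      simpa using h2
    have := hKmin (π 0) (fun he => hc he)
    omega
  set h : ℕ → ℕ := fun t => if ht : t < m + 1 then f (π ⟨t, ht⟩) else 0 with hh
  have hstep : ∀ t, h (t+1) ≤ h t := by
    intro t
    by_cases ht1 : t + 1 < m + 1
    · have ht : t < m + 1 := by omega
      simp only [hh, dif_pos ht1, dif_pos ht]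
      have hlt : (⟨t, ht⟩ : Fin (m+1)) < ⟨t+1, ht1⟩ := by
        rw [Fin.lt_def]; exact Nat.lt_succ_self t
      exact Kf_lt_imp (hfle _) (hsm hlt)
    · simp only [hh, dif_neg ht1]
      exact Nat.zero_le _
  have hle0 : ∀ M, h M ≤ h 0 := by
    intro M
    induction M with
    | zero => exact le_refl _
    | succ M ihM => exact le_trans (hstep M) ihM
  have h0 : h 0 = j := by
    simp only [hh, dif_pos (Nat.succ_pos m)]
    rw [show (⟨0, Nat.succ_pos m⟩ : Fin (m+1)) = 0 from rfl, hπ0, hfvk]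
  set b : Fin (m+1) → ℕ := fun i => h (i : ℕ) - h ((i : ℕ) + 1) with hbdef
  have htele : ∀ N, ∑ t ∈ Finset.range N, (h t - h (t+1)) = h 0 - h N := by
    intro N
    induction N with
    | zero => simp
    | succ N ih =>
      rw [Finset.sum_range_succ, ih]
      have := hstep N
      have := hle0 N
      omega
  have hsumb : ∑ i, b i = j := by
    rw [hbdef, Fin.sum_univ_eq_sum_range (fun t => h t - h (t+1)) (m+1), htele, h0]
    have : h (m+1) = 0 := by simp only [hh, dif_neg (lt_irrefl (m+1))]
    omega
  have hsumFrom : ∀ t, t ≤ m + 1 → sumFrom b t = h t := by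
    have aux : ∀ d t, t + d = m + 1 → sumFrom b t = h t := by
      intro d
      induction d with
      | zero =>
        intro t ht
        rw [sumFrom_of_ge b (by omega)]
        simp only [hh, dif_neg (show ¬ t < m + 1 by omega)]
      | succ d ihd =>
        intro t ht
        have htlt : t < m + 1 := by omega
        rw [sumFrom_succ b htlt, ihd (t+1) (by omega)]
        show b ⟨t, htlt⟩ + h (t+1) = h t
        simp only [hbdef]
        have := hstep t
        omega
    intro t ht
    exact aux (m + 1 - t) t (by omega)
  have hdesb : ∀ i ∈ desSet π, 1 ≤ b i := by
    intro i hi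
    obtain ⟨hlt, hgt⟩ := mem_desSet.1 hi
    have hfin : i < (⟨(i : ℕ) + 1, hlt⟩ : Fin (m+1)) := by
      rw [Fin.lt_def]; exact Nat.lt_succ_self _
    have hle2 : f (π ⟨(i : ℕ) + 1, hlt⟩) ≤ f (π i) := Kf_lt_imp (hfle _) (hsm hfin)
    have hne : f (π ⟨(i : ℕ) + 1, hlt⟩) ≠ f (π i) := by
      intro he
      have hK2 := hsm hfin
      simp only [Function.comp, hK, Kf, he] at hK2
      have : ((π i : Fin (m+1)) : ℕ) < ((π ⟨(i : ℕ) + 1, hlt⟩ : Fin (m+1)) : ℕ) :=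
        Nat.lt_of_add_lt_add_left hK2
      have hgt' : ((π ⟨(i : ℕ) + 1, hlt⟩ : Fin (m+1)) : ℕ) < ((π i : Fin (m+1)) : ℕ) := hgt
      omega
    simp only [hbdef]
    show 1 ≤ h (i : ℕ) - h ((i : ℕ) + 1)
    simp only [hh, dif_pos i.isLt, dif_pos hlt, Fin.eta]
    omega
  refine ⟨⟨π, b⟩, ?_, ?_⟩
  · rw [Sset, Finset.mem_sigma]
    constructor
    · rw [Finset.mem_filter]
      refine ⟨Finset.mem_univ _, ?_⟩
      rw [hπ0]
      show (k - 1) + 1 = k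
      omega
    · rw [mem_Bset]
      exact ⟨hsumb, hdesb⟩
  · funext v
    show sumFrom b ((π.symm v : Fin (m+1)) : ℕ) = f v
    rw [hsumFrom _ (le_of_lt (π.symm v).isLt)]
    simp only [hh, dif_pos (π.symm v).isLt, Fin.eta, Equiv.apply_symm_apply]

lemma card_S_eq_T {k j : ℕ} (hk1 : 1 ≤ k) (hkn : k ≤ m + 1) :
    (Sset (m := m) k j).card = (Tset (m := m) k j).card :=
  Finset.card_bij (fun a _ => Phi a) (fun a ha => Phi_mem hk1 ha)
    (fun a ha a' ha' h => Phi_inj ha ha' h)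
    (fun f hf => Phi_surj hk1 hkn f hf)


lemma grand {k : ℕ} (j : ℕ) (hk1 : 1 ≤ k) (hkn : k ≤ m + 1) :
    ∑ p ∈ Finset.HasAntidiagonal.antidiagonal j, A (m+1) (p.1 : ℤ) k * (m + p.2).choose m
      = j ^ (k-1) * (j+1) ^ (m+1-k) := by
  have h1 : ∀ p ∈ Finset.HasAntidiagonal.antidiagonal j,
      A (m+1) (p.1 : ℤ) k * (m + p.2).choose m
        = A (m+1) (p.1 : ℤ) k * (Finset.Nat.antidiagonalTuple (m+1) p.2).card :=
    fun p _ => by rw [card_adt]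
  rw [Finset.sum_congr rfl h1, ← card_Sset, card_S_eq_T hk1 hkn, card_Tset hk1 hkn]

end Stmt11Aux

open Stmt11Aux in
theorem stmt11_aux (n : ℕ) (hn : 1 ≤ n) (k : ℕ) (hk1 : 1 ≤ k) (hkn : k ≤ n) :
    (∑ d ∈ Finset.range n, PowerSeries.C (R := ℤ) (A n (d : ℤ) k : ℤ) * PowerSeries.X ^ d)
      = (1 - PowerSeries.X) ^ n *
        PowerSeries.mk (fun j => (j : ℤ) ^ (k - 1) * ((j : ℤ) + 1) ^ (n - k)) := by
  obtain ⟨m, rfl⟩ : ∃ m, n = m + 1 := ⟨n - 1, by omega⟩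
  set P : PowerSeries ℤ :=
    ∑ d ∈ Finset.range (m+1), PowerSeries.C (R := ℤ) (A (m+1) (d : ℤ) k : ℤ) * PowerSeries.X ^ d
    with hP
  have hunit : (1 - PowerSeries.X : PowerSeries ℤ) ^ (m+1) * (PowerSeries.mk 1) ^ (m+1) = 1 := by
    rw [← mul_pow, mul_comm, PowerSeries.mk_one_mul_one_sub_eq_one, one_pow]
  have hcP : ∀ a : ℕ, (PowerSeries.coeff (R := ℤ) a) P = (A (m+1) (a : ℤ) k : ℤ) := by
    intro a
    rw [hP, map_sum]
    have hterm : ∀ d ∈ Finset.range (m+1),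
        (PowerSeries.coeff (R := ℤ) a) (PowerSeries.C (R := ℤ) (A (m+1) (d : ℤ) k : ℤ) * PowerSeries.X ^ d)
          = if a = d then (A (m+1) (d : ℤ) k : ℤ) else 0 := by
      intro d _
      rw [PowerSeries.coeff_C_mul, PowerSeries.coeff_X_pow]
      split_ifs <;> simp
    rw [Finset.sum_congr rfl hterm, Finset.sum_ite_eq]
    rcases Nat.lt_or_ge a (m+1) with hlt | hge
    · rw [if_pos (Finset.mem_range.2 hlt)]
    · rw [if_neg (by rw [Finset.mem_range]; omega), A_zero_of_ge hge]
      simp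
  have key : P * (PowerSeries.mk 1) ^ (m+1)
      = PowerSeries.mk (fun j => (j : ℤ) ^ (k-1) * ((j : ℤ) + 1) ^ (m+1-k)) := by
    ext j
    rw [PowerSeries.coeff_mul, PowerSeries.mk_one_pow_eq_mk_choose_add, PowerSeries.coeff_mk]
    have hterm : ∀ p ∈ Finset.HasAntidiagonal.antidiagonal j,
        (PowerSeries.coeff (R := ℤ) p.1) P * (PowerSeries.coeff (R := ℤ) p.2)
            (PowerSeries.mk fun b => ((m + b).choose m : ℤ))
          = ((A (m+1) (p.1 : ℤ) k * (m + p.2).choose m : ℕ) : ℤ) := by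
      intro p _
      rw [hcP, PowerSeries.coeff_mk]
      push_cast
      ring
    rw [Finset.sum_congr rfl hterm, ← Nat.cast_sum, grand j hk1 hkn]
    push_cast
    ring
  calc P = P * 1 := (mul_one P).symm
    _ = P * ((1 - PowerSeries.X : PowerSeries ℤ) ^ (m+1) * (PowerSeries.mk 1) ^ (m+1)) := by
        rw [hunit]
    _ = (1 - PowerSeries.X) ^ (m+1) * (P * (PowerSeries.mk 1) ^ (m+1)) := by ring
    _ = (1 - PowerSeries.X) ^ (m+1) *
        PowerSeries.mk (fun j => (j : ℤ) ^ (k-1) * ((j : ℤ) + 1) ^ (m+1-k)) := by rw [key]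

theorem stmt11 (n : ℕ) (hn : 1 ≤ n) (k : ℕ) (hk1 : 1 ≤ k) (hkn : k ≤ n) :
    (∑ d ∈ Finset.range n, PowerSeries.C (R := ℤ) (A n (d : ℤ) k : ℤ) * PowerSeries.X ^ d)
      = (1 - PowerSeries.X) ^ n *
        PowerSeries.mk (fun j => (j : ℤ) ^ (k - 1) * ((j : ℤ) + 1) ^ (n - k)) :=
  stmt11_aux n hn k hk1 hkn
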